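/- Let d ≥ 2, let L ⊆ ℝ^d be a full-rank lattice, let V ∈ (0, 2^d·det L] and set r = r_L(V). If K ∈ K_L is extremal, i.e. vol K = V and diam K = 2r, then every point x ∈ ℝ^d with dist(x, 2L) ≤ r belongs to 2L + K; equivalently, ℝ^d = (2L + K) ∪ R, where R = {x ∈ ℝ^d : ‖x − y‖ > r for all y ∈ 2L}. -/

import Mathlib

open MeasureTheory Metric

section
variable {d : ℕ} (A : Matrix (Fin d) (Fin d) ℝ)

noncomputable def lat (z : Fin d → ℤ) : EuclideanSpace ℝ (Fin d) :=
  WithLp.toLp 2 (A.mulVec (fun i => (z i : ℝ)))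

lemma lat_sub (z w : Fin d → ℤ) : lat A (z - w) = lat A z - lat A w := by
  have h : (fun i => (((z - w) i : ℤ) : ℝ)) = (fun i => ((z i : ℤ) : ℝ)) - (fun i => ((w i : ℤ) : ℝ)) := by
    funext i; simp
  show WithLp.toLp 2 (A.mulVec _) = WithLp.toLp 2 (A.mulVec _) - WithLp.toLp 2 (A.mulVec _)
  rw [h, Matrix.mulVec_sub, WithLp.toLp_sub]

lemma lat_zero : lat A 0 = 0 := by
  show WithLp.toLp 2 (A.mulVec _) = _
  rw [show (fun i => (((0 : Fin d → ℤ) i : ℤ) : ℝ)) = 0 from by funext i; simp,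
    Matrix.mulVec_zero, WithLp.toLp_zero]

lemma lat_inj (hA : IsUnit A.det) : Function.Injective (lat A) := by
  intro z w h
  have hinj : Function.Injective A.mulVec := Matrix.mulVec_injective_iff_isUnit.2 (by
    rwa [Matrix.isUnit_iff_isUnit_det])
  have h' : A.mulVec (fun i => (z i : ℝ)) = A.mulVec (fun i => (w i : ℝ)) := congrArg WithLp.ofLp h
  have := hinj h'
  funext i
  have := congrFun this i
  exact_mod_cast this

lemma abs_coord_le_norm (u : EuclideanSpace ℝ (Fin d)) (i : Fin d) : |u i| ≤ ‖u‖ := by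
  rw [EuclideanSpace.norm_eq, ← Real.sqrt_sq_eq_abs]
  apply Real.sqrt_le_sqrt
  have h1 : |u i| ^ 2 ≤ ∑ j, ‖u j‖ ^ 2 := by
    have := Finset.single_le_sum (f := fun j => ‖u j‖^2) (fun j _ => sq_nonneg _) (Finset.mem_univ i)
    simpa [Real.norm_eq_abs, sq_abs] using this
  calc u i ^ 2 = |u i| ^ 2 := (sq_abs _).symm
  _ ≤ _ := h1

end

section
variable {d : ℕ} (A : Matrix (Fin d) (Fin d) ℝ)

lemma lat_finite (hA : IsUnit A.det) (C : ℝ) : {z : Fin d → ℤ | ‖lat A z‖ ≤ C}.Finite := by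
  classical
  set B := A⁻¹ with hB
  have hrec : ∀ z : Fin d → ℤ, B.mulVec (lat A z) = fun i => (z i : ℝ) := by
    intro z
    show B.mulVec (A.mulVec _) = _
    rw [Matrix.mulVec_mulVec, hB, Matrix.nonsing_inv_mul A hA, Matrix.one_mulVec]
  set M : ℝ := ∑ i, ∑ j, |B i j| with hM
  set N : ℤ := ⌈M * C⌉ with hN
  have key : ∀ z ∈ {z : Fin d → ℤ | ‖lat A z‖ ≤ C}, ∀ i, z i ∈ Set.Icc (-N) N := by
    intro z hz i
    have h1 : |(z i : ℝ)| ≤ M * C := by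
      have h2 : (z i : ℝ) = (B.mulVec (lat A z)) i := by rw [hrec]
      rw [h2]
      show |∑ j, B i j * (lat A z) j| ≤ M * C
      calc |∑ j, B i j * (lat A z) j| ≤ ∑ j, |B i j * (lat A z) j| :=
            Finset.abs_sum_le_sum_abs _ _
        _ ≤ ∑ j, |B i j| * C := by
            apply Finset.sum_le_sum
            intro j _
            rw [abs_mul]
            exact mul_le_mul_of_nonneg_left ((abs_coord_le_norm _ j).trans hz) (abs_nonneg _)
        _ = (∑ j, |B i j|) * C := by rw [Finset.sum_mul]
        _ ≤ M * C := by
            have hC : 0 ≤ C := (norm_nonneg (lat A z)).trans hz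
            exact mul_le_mul_of_nonneg_right
              (Finset.single_le_sum (f := fun i => ∑ j, |B i j|)
                (fun _ _ => Finset.sum_nonneg fun _ _ => abs_nonneg _) (Finset.mem_univ i)) hC
    have h3 : ((|z i| : ℤ) : ℝ) ≤ (N : ℝ) := by rw [Int.cast_abs]; exact h1.trans (Int.le_ceil _)
    have h4 : |z i| ≤ N := by exact_mod_cast h3
    exact ⟨neg_le_of_abs_le h4, le_of_abs_le h4⟩
  have : {z : Fin d → ℤ | ‖lat A z‖ ≤ C} ⊆ Set.pi Set.univ (fun _ => Set.Icc (-N) N) := by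
    intro z hz
    intro i _
    exact key z hz i
  exact Set.Finite.subset (Set.Finite.pi (fun i => Set.finite_Icc _ _)) this

end

section
variable {E : Type*} [NormedAddCommGroup E] [InnerProductSpace ℝ E]

lemma norm_le_norm_sub_iff_inner (x c : E) :
    ‖x‖ ≤ ‖x - c‖ ↔ inner ℝ x c ≤ ‖c‖^2/2 := by
  have h := @norm_sub_sq_real E _ _ x c
  constructor
  · intro h1
    nlinarith [norm_nonneg x, norm_nonneg (x - c)]
  · intro h1
    nlinarith [norm_nonneg x, norm_nonneg (x - c)]

lemma convex_halfspace_norm (c : E) : Convex ℝ {x : E | ‖x‖ ≤ ‖x - c‖} := by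
  have : {x : E | ‖x‖ ≤ ‖x - c‖} = {x : E | (inner ℝ x c : ℝ) ≤ ‖c‖^2/2} := by
    ext x; exact norm_le_norm_sub_iff_inner x c
  rw [this]
  exact convex_halfSpace_le ⟨fun a b => inner_add_left a b c, fun r a => real_inner_smul_left a c r⟩ _

end

lemma bisector_null {d : ℕ} (a b : EuclideanSpace ℝ (Fin d)) (h : a ≠ b) :
    volume {x : EuclideanSpace ℝ (Fin d) | ‖x - a‖ = ‖x - b‖} = 0 := by
  have hset : {x : EuclideanSpace ℝ (Fin d) | ‖x - a‖ = ‖x - b‖}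
      = (AffineSubspace.perpBisector a b : Set (EuclideanSpace ℝ (Fin d))) := by
    ext x
    simp only [SetLike.mem_coe, AffineSubspace.mem_perpBisector_iff_dist_eq, Set.mem_setOf_eq,
      dist_eq_norm]
  rw [hset]
  exact Measure.addHaar_affineSubspace _ _ (by simpa using h)



set_option maxHeartbeats 1000000 in
/-- If `K ∈ K_L` is extremal (`vol K = V`, `diam K = 2 r_L(V)`), then every point at
distance at most `r_L(V)` from `2L` belongs to `2L + K`; equivalently
`ℝ^d = (2L + K) ∪ R` with `R = {x : ‖x - y‖ > r for all y ∈ 2L}`. -/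
theorem extremal_body_covers_complement_of_R
    (d : ℕ) (hd : 2 ≤ d)
    (A : Matrix (Fin d) (Fin d) ℝ) (hA : IsUnit A.det)
    (L : Set (EuclideanSpace ℝ (Fin d)))
    (hL : L = {x | ∃ z : Fin d → ℤ, x = WithLp.toLp 2 (A.mulVec (fun i => (z i : ℝ)))})
    -- `DV2L` is the Dirichlet–Voronoi cell of the lattice `2L`
    (DV2L : Set (EuclideanSpace ℝ (Fin d)))
    (hDV : DV2L = {x | ∀ y ∈ L, ‖x‖ ≤ ‖x - (2 : ℝ) • y‖})
    -- `μ` is the covering radius (inhomogeneous minimum) of `L`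
    (μ : ℝ) (hμ : μ = ⨆ x : EuclideanSpace ℝ (Fin d), infDist x L)
    (V : ℝ) (hV0 : 0 < V) (hV1 : V ≤ 2 ^ d * |A.det|)
    -- `r = r_L(V)`
    (r : ℝ) (hr0 : 0 < r) (hrμ : r ≤ 2 * μ)
    (hrV : volume (closedBall (0 : EuclideanSpace ℝ (Fin d)) r ∩ DV2L)
      = ENNReal.ofReal V)
    -- `K ∈ K_L` is extremal: `vol K = V` and `diam K = 2r`
    (K : Set (EuclideanSpace ℝ (Fin d)))
    (hKcpt : IsCompact K) (hKconv : Convex ℝ K) (hKsymm : K = -K)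
    (hKadm : ∀ y ∈ L, y ≠ 0 → y ∉ interior K)
    (hKvol : volume K = ENNReal.ofReal V)
    (hKdiam : diam K = 2 * r)
    (x : EuclideanSpace ℝ (Fin d))
    -- `x ∉ R`, i.e. `dist (x, 2L) ≤ r`
    (hx : ∃ y ∈ L, ‖x - (2 : ℝ) • y‖ ≤ r) :
    ∃ y ∈ L, x - (2 : ℝ) • y ∈ K := by
  classical
  -- the lattice as image of `lat`
  have hmemL : ∀ z : Fin d → ℤ, lat A z ∈ L := fun z => by rw [hL]; exact ⟨z, rfl⟩
  have hLmem : ∀ y ∈ L, ∃ z : Fin d → ℤ, y = lat A z := fun y hy => by rwa [hL] at hy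
  set Λ : (Fin d → ℤ) → EuclideanSpace ℝ (Fin d) := fun z => (2 : ℝ) • lat A z with hΛ
  have hΛsub : ∀ z w : Fin d → ℤ, Λ z - Λ w = (2 : ℝ) • lat A (z - w) := by
    intro z w; rw [lat_sub, smul_sub]
  -- basic lattice facts
  have hlatinj := lat_inj A hA
  -- DV2L is closed
  have hDVmem : ∀ v : EuclideanSpace ℝ (Fin d), v ∈ DV2L ↔ ∀ z : Fin d → ℤ, ‖v‖ ≤ ‖v - Λ z‖ := by
    intro v
    rw [hDV]
    constructor
    · intro h z; exact h (lat A z) (hmemL z)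
    · intro h y hy
      obtain ⟨z, rfl⟩ := hLmem y hy
      exact h z
  have hDVclosed : IsClosed DV2L := by
    have : DV2L = ⋂ z : Fin d → ℤ, {v : EuclideanSpace ℝ (Fin d) | ‖v‖ ≤ ‖v - Λ z‖} := by
      ext v; simp only [Set.mem_iInter, Set.mem_setOf_eq, hDVmem]
    rw [this]
    exact isClosed_iInter fun z =>
      isClosed_le continuous_norm ((continuous_id.sub continuous_const).norm)
  have hDVconvex : Convex ℝ DV2L := by
    have : DV2L = ⋂ z : Fin d → ℤ, {v : EuclideanSpace ℝ (Fin d) | ‖v‖ ≤ ‖v - Λ z‖} := by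
      ext v; simp only [Set.mem_iInter, Set.mem_setOf_eq, hDVmem]
    rw [this]
    exact convex_iInter fun z => convex_halfspace_norm (Λ z)
  -- 0 is in the interior of DV2L
  have h0DV : (0 : EuclideanSpace ℝ (Fin d)) ∈ DV2L := by
    rw [hDVmem]
    intro z
    simp [norm_nonneg]
  have h0int : (0 : EuclideanSpace ℝ (Fin d)) ∈ interior DV2L := by
    -- shortest vector bound
    obtain ⟨m, hm0, hm1, hmlb⟩ : ∃ m : ℝ, 0 < m ∧ m ≤ 1 ∧
        ∀ z : Fin d → ℤ, z ≠ 0 → m ≤ ‖lat A z‖ := by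
      have hfin : {z : Fin d → ℤ | ‖lat A z‖ ≤ 1}.Finite := lat_finite A hA 1
      set s : Finset ℝ := insert 1 ((hfin.toFinset.filter (· ≠ 0)).image fun z => ‖lat A z‖)
        with hs
      have hne : s.Nonempty := ⟨1, Finset.mem_insert_self _ _⟩
      refine ⟨s.min' hne, ?_, ?_, ?_⟩
      · have : ∀ a ∈ s, 0 < a := by
          intro a ha
          rcases Finset.mem_insert.1 ha with rfl | ha
          · norm_num
          · obtain ⟨z, hz, rfl⟩ := Finset.mem_image.1 ha
            have hz0 : z ≠ 0 := by simpa using (Finset.mem_filter.1 hz).2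
            have : lat A z ≠ 0 := by
              intro h
              exact hz0 (hlatinj (h.trans (lat_zero A).symm))
            exact norm_pos_iff.mpr this
        exact this _ (s.min'_mem hne)
      · exact Finset.min'_le _ _ (Finset.mem_insert_self _ _)
      · intro z hz0
        by_cases h1 : ‖lat A z‖ ≤ 1
        · refine Finset.min'_le _ _ ?_
          refine Finset.mem_insert_of_mem (Finset.mem_image.2 ⟨z, ?_, rfl⟩)
          rw [Finset.mem_filter]
          exact ⟨hfin.mem_toFinset.2 h1, by simpa using hz0⟩
        · have h2 : s.min' hne ≤ 1 := Finset.min'_le _ _ (Finset.mem_insert_self _ _)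
          linarith [not_le.1 h1]
    rw [mem_interior]
    refine ⟨ball 0 m, ?_, isOpen_ball, by simpa using hm0⟩
    intro v hv
    have hvm : ‖v‖ < m := by simpa using hv
    rw [hDVmem]
    intro z
    by_cases hz0 : z = 0
    · subst hz0
      have : Λ 0 = 0 := by simp [hΛ, lat_zero]
      rw [this]
      simp
    · have hzl : m ≤ ‖lat A z‖ := hmlb z hz0
      have h1 : ‖Λ z‖ = 2 * ‖lat A z‖ := by
        rw [hΛ]; simp [norm_smul]
      have h2 : ‖v - Λ z‖ ≥ ‖Λ z‖ - ‖v‖ := by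
        have := norm_sub_norm_le (Λ z) v
        have h3 : ‖Λ z - v‖ = ‖v - Λ z‖ := norm_sub_rev _ _
        linarith
      linarith
  -- nearest lattice point
  have hnearest : ∀ p : EuclideanSpace ℝ (Fin d), ∃ z : Fin d → ℤ, (∀ w : Fin d → ℤ, ‖p - Λ z‖ ≤ ‖p - Λ w‖) := by
    intro p
    have hfin : {z : Fin d → ℤ | ‖lat A z‖ ≤ ‖p‖}.Finite := lat_finite A hA ‖p‖
    have h0mem : (0 : Fin d → ℤ) ∈ hfin.toFinset := by
      rw [Set.Finite.mem_toFinset]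
      simp [lat_zero]
    obtain ⟨z, hz, hzmin⟩ := Finset.exists_min_image hfin.toFinset
      (fun z => ‖p - Λ z‖) ⟨0, h0mem⟩
    refine ⟨z, fun w => ?_⟩
    by_cases hw : w ∈ hfin.toFinset
    · exact hzmin w hw
    · -- ‖lat A w‖ > ‖p‖, so ‖p - Λ w‖ ≥ ‖Λ w‖ - ‖p‖ > ‖p‖
      have hw1 : ‖p‖ < ‖lat A w‖ := by
        rw [Set.Finite.mem_toFinset] at hw
        exact not_le.1 hw
      have hz0 : ‖p - Λ z‖ ≤ ‖p - Λ 0‖ := hzmin 0 h0mem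
      have hΛ0 : Λ 0 = 0 := by simp [hΛ, lat_zero]
      have h1 : ‖Λ w‖ = 2 * ‖lat A w‖ := by rw [hΛ]; simp [norm_smul]
      have h2 : ‖p - Λ w‖ ≥ ‖Λ w‖ - ‖p‖ := by
        have := norm_sub_norm_le (Λ w) p
        have h3 : ‖Λ w - p‖ = ‖p - Λ w‖ := norm_sub_rev _ _
        linarith
      have hp0 : 0 ≤ ‖p‖ := norm_nonneg p
      rw [hΛ0, sub_zero] at hz0
      linarith
  -- K is contained in the ball of radius r
  have hKball : K ⊆ closedBall (0 : EuclideanSpace ℝ (Fin d)) r := by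
    intro u hu
    have hneg : -u ∈ K := by
      have h1 : -u ∈ -K := Set.neg_mem_neg.2 hu
      rwa [← hKsymm] at h1
    have hdd := dist_le_diam_of_mem hKcpt.isBounded hu hneg
    rw [hKdiam] at hdd
    have h2 : dist u (-u) = 2 * ‖u‖ := by
      rw [dist_eq_norm, sub_neg_eq_add, ← two_smul ℝ u, norm_smul]
      simp
    rw [mem_closedBall, dist_zero_right]
    linarith [h2 ▸ hdd]
  have hΛinj : Function.Injective Λ := by
    intro a b hab
    exact hlatinj (smul_right_injective _ (two_ne_zero) hab)
  have hΛ' : ∀ a b : Fin d → ℤ, Λ a - Λ b = Λ (a - b) := by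
    intro a b; rw [hΛsub]
  -- translates of K and cells
  set T : (Fin d → ℤ) → Set (EuclideanSpace ℝ (Fin d)) :=
    fun z => (fun v => v + Λ z) ⁻¹' K with hT
  set Cc : (Fin d → ℤ) → Set (EuclideanSpace ℝ (Fin d)) :=
    fun z => (fun v => v - Λ z) ⁻¹' DV2L with hCc
  have hTclosed : ∀ z, IsClosed (T z) := fun z =>
    hKcpt.isClosed.preimage (continuous_add_right _)
  have hCclosed : ∀ z, IsClosed (Cc z) := fun z =>
    hDVclosed.preimage (continuous_sub_right _)
  have hFfin : {z : Fin d → ℤ | ‖lat A z‖ ≤ r}.Finite := lat_finite A hA r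
  set Ft : Finset (Fin d → ℤ) := hFfin.toFinset with hFt
  -- K is covered by the cells indexed by Ft
  have hKcover : K ⊆ ⋃ z ∈ Ft, Cc z := by
    intro u hu
    obtain ⟨z, hzmin⟩ := hnearest u
    have hur : ‖u‖ ≤ r := by
      have := hKball hu
      rwa [mem_closedBall, dist_zero_right] at this
    have h1 : ‖u - Λ z‖ ≤ ‖u‖ := by
      have h0 : Λ 0 = 0 := by simp [hΛ, lat_zero]
      have := hzmin 0
      rwa [h0, sub_zero] at this
    have hzF : z ∈ Ft := by
      rw [hFt, Set.Finite.mem_toFinset]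
      have h2 : ‖Λ z‖ ≤ 2 * r := by
        calc ‖Λ z‖ = ‖(u - Λ z) - u‖ := by rw [sub_sub_cancel_left, norm_neg]
        _ ≤ ‖u - Λ z‖ + ‖u‖ := norm_sub_le _ _
        _ ≤ r + r := add_le_add (h1.trans hur) hur
        _ = 2 * r := by ring
      have h3 : ‖Λ z‖ = 2 * ‖lat A z‖ := by rw [hΛ]; simp [norm_smul]
      simp only [Set.mem_setOf_eq]
      linarith [h3 ▸ h2]
    refine Set.mem_biUnion hzF ?_
    rw [hCc]
    show u - Λ z ∈ DV2L
    rw [hDVmem]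
    intro v
    have heq : u - Λ z - Λ v = u - Λ (z + v) := by
      have := hΛ' (z + v) v
      simp only [add_sub_cancel_right] at this
      rw [← this]; abel
    rw [heq]
    exact hzmin (z + v)
  -- cells are a.e. disjoint
  have hCCnull : ∀ z w : Fin d → ℤ, z ≠ w → volume (Cc z ∩ Cc w) = 0 := by
    intro z w hzw
    have hsub : Cc z ∩ Cc w ⊆ {v : EuclideanSpace ℝ (Fin d) | ‖v - Λ z‖ = ‖v - Λ w‖} := by
      rintro v ⟨hvz, hvw⟩
      have h1 : ‖v - Λ z‖ ≤ ‖v - Λ w‖ := by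
        have hm : v - Λ z ∈ DV2L := hvz
        rw [hDVmem] at hm
        have := hm (w - z)
        have heq : v - Λ z - Λ (w - z) = v - Λ w := by
          rw [← hΛ' w z]; abel
        rwa [heq] at this
      have h2 : ‖v - Λ w‖ ≤ ‖v - Λ z‖ := by
        have hm : v - Λ w ∈ DV2L := hvw
        rw [hDVmem] at hm
        have := hm (z - w)
        have heq : v - Λ w - Λ (z - w) = v - Λ z := by
          rw [← hΛ' z w]; abel
        rwa [heq] at this
      exact le_antisymm h1 h2
    exact measure_mono_null hsub (bisector_null _ _ (fun h => hzw (hΛinj h)))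
  have hCmeas : ∀ z, MeasurableSet (Cc z) := fun z => (hCclosed z).measurableSet
  have hTmeas : ∀ z, MeasurableSet (T z) := fun z => (hTclosed z).measurableSet
  -- vol K = Σ vol (K ∩ Cc z)
  have step2 : volume K = ∑ z ∈ Ft, volume (K ∩ Cc z) := by
    have hKeq : K = ⋃ z ∈ Ft, (K ∩ Cc z) := by
      apply Set.Subset.antisymm
      · intro u hu
        obtain ⟨z, hz, hz2⟩ := Set.mem_iUnion₂.1 (hKcover hu)
        exact Set.mem_iUnion₂.2 ⟨z, hz, hu, hz2⟩
      · intro u hu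
        obtain ⟨z, _, hu2, _⟩ := Set.mem_iUnion₂.1 hu
        exact hu2
    rw [show volume K = volume (⋃ z ∈ Ft, (K ∩ Cc z)) from by rw [← hKeq]]
    refine measure_biUnion_finset₀ ?_ ?_
    · intro z hz w hw hzw
      exact measure_mono_null
        (Set.inter_subset_inter (Set.inter_subset_right) (Set.inter_subset_right))
        (hCCnull z w hzw)
    · exact fun z _ => (hKcpt.isClosed.measurableSet.inter (hCmeas z)).nullMeasurableSet
  -- translate
  have step3 : ∀ z : Fin d → ℤ, volume (K ∩ Cc z) = volume (T z ∩ DV2L) := by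
    intro z
    have hpre : (fun v => v + Λ z) ⁻¹' (K ∩ Cc z) = T z ∩ DV2L := by
      ext v
      simp only [Set.mem_preimage, Set.mem_inter_iff, hT, hCc, add_sub_cancel_right]
    rw [← hpre]
    exact (measure_preimage_add_right volume (Λ z) _).symm
  -- translated pieces live in S = closedBall 0 r ∩ DV2L
  have hTS : ∀ z : Fin d → ℤ, T z ∩ DV2L ⊆ closedBall (0 : EuclideanSpace ℝ (Fin d)) r ∩ DV2L := by
    rintro z v ⟨hvT, hvDV⟩
    refine ⟨?_, hvDV⟩
    have h1 : v + Λ z ∈ K := hvT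
    have h2 : ‖v + Λ z‖ ≤ r := by
      have := hKball h1
      rwa [mem_closedBall, dist_zero_right] at this
    have h3 : ‖v‖ ≤ ‖v + Λ z‖ := by
      rw [hDVmem] at hvDV
      have := hvDV (0 - z)
      have heq : v - Λ (0 - z) = v + Λ z := by
        rw [← hΛ' 0 z]
        have h0 : Λ 0 = 0 := by simp [hΛ, lat_zero]
        rw [h0]; abel
      rwa [heq] at this
    rw [mem_closedBall, dist_zero_right]
    linarith
  -- translates of K are a.e. disjoint
  have hTTnull : ∀ z w : Fin d → ℤ, z ≠ w → volume (T z ∩ T w) = 0 := by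
    intro z w hzw
    have hfr : ∀ u : Fin d → ℤ, volume (frontier (T u)) = 0 := by
      intro u
      have h1 : frontier (T u) = (fun v => v + Λ u) ⁻¹' frontier K :=
        ((Homeomorph.addRight (Λ u)).preimage_frontier K).symm
      rw [h1, measure_preimage_add_right]
      exact hKconv.addHaar_frontier volume
    have hsub : T z ∩ T w ⊆ frontier (T z) ∪ frontier (T w) := by
      rintro v ⟨hvz, hvw⟩
      by_contra hcon
      rw [Set.mem_union, not_or] at hcon
      obtain ⟨hc1, hc2⟩ := hcon
      have hiz : v ∈ interior (T z) := by
        have := (hTclosed z).frontier_eq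
        rw [this] at hc1
        simp only [Set.mem_diff, not_and, not_not] at hc1
        exact hc1 hvz
      have hiw : v ∈ interior (T w) := by
        have := (hTclosed w).frontier_eq
        rw [this] at hc2
        simp only [Set.mem_diff, not_and, not_not] at hc2
        exact hc2 hvw
      -- get a nonzero lattice point in interior K
      have hintT : ∀ u : Fin d → ℤ, interior (T u) = (fun v => v + Λ u) ⁻¹' interior K :=
        fun u => ((Homeomorph.addRight (Λ u)).preimage_interior K).symm
      rw [hintT z] at hiz
      rw [hintT w] at hiw
      have hu1 : v + Λ z ∈ interior K := hiz
      have hu2 : v + Λ w ∈ interior K := hiw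
      have hu3 : -(v + Λ w) ∈ interior K := by
        have h1 : v + Λ w ∈ interior (-K) := by rwa [← hKsymm]
        have hnegint : interior (-K) = Neg.neg ⁻¹' interior K := by
          have := ((Homeomorph.neg (EuclideanSpace ℝ (Fin d))).preimage_interior K).symm
          simpa using this
        rw [hnegint] at h1
        exact h1
      have hy0 : lat A (z - w) ≠ 0 := by
        intro h
        apply hzw
        have := hlatinj (h.trans (lat_zero A).symm)
        rwa [sub_eq_zero] at this
      have hmid : (1/2 : ℝ) • (v + Λ z) + (1/2 : ℝ) • (-(v + Λ w)) = lat A (z - w) := by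
        have h1 : (v + Λ z) - (v + Λ w) = Λ z - Λ w := by abel
        have h2 : Λ z - Λ w = (2 : ℝ) • lat A (z - w) := hΛsub z w
        rw [smul_neg, ← sub_eq_add_neg, ← smul_sub, h1, h2, smul_smul]
        norm_num
      have hmem : lat A (z - w) ∈ interior K := by
        rw [← hmid]
        exact hKconv.interior hu1 hu3 (by norm_num) (by norm_num) (by norm_num)
      exact hKadm _ (hmemL (z - w)) hy0 hmem
    exact measure_mono_null hsub
      (measure_union_null (hfr z) (hfr w))
  -- the union U and its volume
  set U : Set (EuclideanSpace ℝ (Fin d)) := ⋃ z ∈ Ft, (T z ∩ DV2L) with hU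
  have hUmeas : MeasurableSet U :=
    Finset.measurableSet_biUnion _ fun z _ => (hTmeas z).inter hDVclosed.measurableSet
  have hUvol : volume U = ENNReal.ofReal V := by
    rw [hU]
    rw [measure_biUnion_finset₀ ?_ (fun z _ => ((hTmeas z).inter hDVclosed.measurableSet).nullMeasurableSet)]
    · rw [← hKvol, step2]
      exact (Finset.sum_congr rfl fun z _ => (step3 z).symm)
    · intro z hz w hw hzw
      exact measure_mono_null
        (Set.inter_subset_inter (Set.inter_subset_left) (Set.inter_subset_left))
        (hTTnull z w hzw)
  have hUS : U ⊆ closedBall (0 : EuclideanSpace ℝ (Fin d)) r ∩ DV2L := by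
    rw [hU]
    exact Set.iUnion₂_subset fun z _ => hTS z
  have hdiffnull : volume ((closedBall (0 : EuclideanSpace ℝ (Fin d)) r ∩ DV2L) \ U) = 0 := by
    rw [measure_diff hUS hUmeas.nullMeasurableSet (by rw [hUvol]; exact ENNReal.ofReal_ne_top),
      hrV, hUvol, tsub_self]
  have hUclosed : IsClosed U := by
    rw [hU]
    exact Set.Finite.isClosed_biUnion (Ft.finite_toSet) fun z _ => (hTclosed z).inter hDVclosed
  -- the point x: take nearest lattice point
  obtain ⟨y₀, hy₀L, hy₀r⟩ := hx
  obtain ⟨z', rfl⟩ := hLmem y₀ hy₀L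
  obtain ⟨z₀, hz₀min⟩ := hnearest x
  set w : EuclideanSpace ℝ (Fin d) := x - Λ z₀ with hw
  have hwDV : w ∈ DV2L := by
    rw [hDVmem]
    intro u
    have heq : w - Λ u = x - Λ (z₀ + u) := by
      rw [hw]
      have := hΛ' (z₀ + u) u
      simp only [add_sub_cancel_right] at this
      rw [← this]; abel
    rw [heq]
    exact hz₀min (z₀ + u)
  have hwr : ‖w‖ ≤ r := by
    have h1 : ‖x - Λ z'‖ ≤ r := hy₀r
    exact (hz₀min z').trans h1
  -- w belongs to the closed set U
  have hwU : w ∈ U := by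
    rw [← hUclosed.closure_eq]
    rw [Metric.mem_closure_iff]
    intro ε hε
    set t : ℝ := min (1/2) (ε / (2 * (‖w‖ + 1))) with ht
    have hw1 : (0:ℝ) < ‖w‖ + 1 := by positivity
    have ht0 : 0 < t := by
      apply lt_min (by norm_num)
      positivity
    have ht1 : t ≤ 1/2 := min_le_left _ _
    have htw : t * ‖w‖ < ε / 2 := by
      have h1 : t ≤ ε / (2 * (‖w‖ + 1)) := min_le_right _ _
      have h2 : t * ‖w‖ ≤ (ε / (2 * (‖w‖ + 1))) * ‖w‖ :=
        mul_le_mul_of_nonneg_right h1 (norm_nonneg w)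
      have h3 : (ε / (2 * (‖w‖ + 1))) * ‖w‖ < ε / 2 := by
        rw [div_mul_eq_mul_div, div_lt_div_iff₀ (by positivity) (by norm_num)]
        nlinarith [norm_nonneg w]
      linarith
    set wt : EuclideanSpace ℝ (Fin d) := (1 - t) • w with hwt
    have hwtint : wt ∈ interior DV2L := by
      have := hDVconvex.combo_interior_self_mem_interior h0int hwDV ht0
        (by linarith : (0:ℝ) ≤ 1 - t) (by ring)
      simpa [hwt, smul_zero] using this
    have hwtr : ‖wt‖ < r := by
      rw [hwt, norm_smul, Real.norm_eq_abs, abs_of_nonneg (by linarith : (0:ℝ) ≤ 1 - t)]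
      calc (1 - t) * ‖w‖ ≤ (1 - t) * r := by
            apply mul_le_mul_of_nonneg_left hwr (by linarith)
      _ < r := by nlinarith
    have hwtO : wt ∈ interior DV2L ∩ ball (0 : EuclideanSpace ℝ (Fin d)) r :=
      ⟨hwtint, by rwa [mem_ball, dist_zero_right]⟩
    obtain ⟨δ, hδ0, hδ⟩ := Metric.isOpen_iff.1 (isOpen_interior.inter isOpen_ball) wt hwtO
    set δ' : ℝ := min δ (ε / 2) with hδ'
    have hδ'0 : 0 < δ' := lt_min hδ0 (by linarith)
    have hexists : ∃ p ∈ U, p ∈ ball wt δ' := by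
      by_contra hcon
      push_neg at hcon
      have hsub : ball wt δ' ⊆ (closedBall (0 : EuclideanSpace ℝ (Fin d)) r ∩ DV2L) \ U := by
        intro p hp
        have hp2 : p ∈ ball wt δ := ball_subset_ball (min_le_left _ _) hp
        have hp3 := hδ hp2
        refine ⟨⟨ball_subset_closedBall hp3.2, interior_subset hp3.1⟩, ?_⟩
        intro hpU
        exact (hcon p hpU) hp
      have : volume (ball wt δ') ≤ volume ((closedBall (0 : EuclideanSpace ℝ (Fin d)) r ∩ DV2L) \ U) :=
        measure_mono hsub
      rw [hdiffnull] at this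
      exact absurd (le_antisymm this (zero_le)) (measure_ball_pos volume wt hδ'0).ne'
    obtain ⟨p, hpU, hpball⟩ := hexists
    refine ⟨p, hpU, ?_⟩
    have hd1 : dist w wt = t * ‖w‖ := by
      rw [hwt, dist_eq_norm]
      have heq : w - (1 - t) • w = t • w := by
        have h := sub_smul (1 : ℝ) (1 - t) w
        rw [one_smul] at h
        rw [← h]
        congr 1
        ring
      rw [heq, norm_smul, Real.norm_eq_abs, abs_of_pos ht0]
    have hd2 : dist wt p < δ' := by rwa [mem_ball, dist_comm] at hpball
    calc dist w p ≤ dist w wt + dist wt p := dist_triangle _ _ _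
    _ < t * ‖w‖ + δ' := by rw [hd1]; linarith
    _ ≤ ε / 2 + ε / 2 := by
        have : δ' ≤ ε / 2 := min_le_right _ _
        linarith
    _ = ε := by ring
  -- conclude
  rw [hU] at hwU
  obtain ⟨z, hzF, hzmem⟩ := Set.mem_iUnion₂.1 hwU
  refine ⟨lat A (z₀ - z), hmemL _, ?_⟩
  have h1 : w + Λ z ∈ K := hzmem.1
  have h2 : x - (2 : ℝ) • lat A (z₀ - z) = w + Λ z := by
    rw [hw, ← hΛsub z₀ z]
    abel
  rwa [h2]
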